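/- Let H be a real Hilbert space with inner product (·,·), and let S_h ⊆ H be a closed subspace with orthogonal projection P₀ : H → S_h. Let ‖·‖₁ be another norm on H and assume the stability bound ‖P₀ z‖₁ ≤ C₀ ‖z‖₁ for all z ∈ H with C₀ > 0. Define the dual norm ‖μ‖_Λ = sup over nonzero z ∈ H of (μ, z)/‖z‖₁. Then for every μ in a subspace Λ_h ⊆ S_h, one has sup over nonzero z_h ∈ S_h of (μ, z_h)/‖z_h‖₁ ≥ (1/C₀) ‖μ‖_Λ. -/

import Mathlib

open RealInnerProductSpace

/-- `H¹`-stability of the `L²`-projection implies the inf-sup condition: if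
`‖P₀ z‖₁ ≤ C₀ ‖z‖₁` for all `z`, then for `μ` in a subspace `Λ_h ⊆ S_h`,
`sup_{z_h ∈ S_h} (μ, z_h)/‖z_h‖₁ ≥ (1/C₀) ‖μ‖_Λ`, where `‖μ‖_Λ` is the dual norm. -/
theorem infsup_of_projection_stability {H : Type*} [NormedAddCommGroup H]
    [InnerProductSpace ℝ H] [CompleteSpace H]
    (Sh : Submodule ℝ H) [CompleteSpace Sh]
    (n1 : H → ℝ) (hn1 : ∀ z : H, z ≠ 0 → 0 < n1 z)
    (C₀ : ℝ) (hC₀ : 0 < C₀)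
    (hstab : ∀ z : H, n1 ((Sh.orthogonalProjection z : H)) ≤ C₀ * n1 z)
    (Λh : Submodule ℝ H) (hΛS : Λh ≤ Sh) :
    ∀ μ ∈ Λh,
      sSup {r : ℝ | ∃ z ∈ Sh, z ≠ 0 ∧ r = ⟪μ, z⟫ / n1 z} ≥
        (1 / C₀) * sSup {r : ℝ | ∃ z : H, z ≠ 0 ∧ r = ⟪μ, z⟫ / n1 z} := by
  intro μ hμ
  have hμS : μ ∈ Sh := hΛS hμ
  set A : Set ℝ := {r : ℝ | ∃ z ∈ Sh, z ≠ 0 ∧ r = ⟪μ, z⟫ / n1 z} with hA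
  set B : Set ℝ := {r : ℝ | ∃ z : H, z ≠ 0 ∧ r = ⟪μ, z⟫ / n1 z} with hB
  -- key: ⟪μ, z⟫ = ⟪μ, P₀ z⟫
  have hproj : ∀ z : H, ⟪μ, z⟫ = ⟪μ, (Sh.orthogonalProjection z : H)⟫ := by
    intro z
    have h0 : ⟪z - (Sh.orthogonalProjection z : H), μ⟫ = 0 :=
      Sh.starProjection_inner_eq_zero z μ hμS
    have := real_inner_comm (z - (Sh.orthogonalProjection z : H)) μ
    rw [h0, inner_sub_right] at *
    linarith [real_inner_comm z μ]
  by_cases hμ0 : μ = 0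
  · subst hμ0
    have hAle : (0:ℝ) ≤ sSup A := by
      apply Real.sSup_nonneg
      rintro r ⟨z, _, _, rfl⟩
      simp
    have hBle : sSup B ≤ 0 := by
      apply Real.sSup_le
      · rintro r ⟨z, _, rfl⟩
        simp
      · exact le_refl 0
    have h3 : 0 < 1/C₀ := one_div_pos.mpr hC₀
    nlinarith
  · by_cases hbdd : BddAbove A
    · have hAmem : ⟪μ, μ⟫ / n1 μ ∈ A := ⟨μ, hμS, hμ0, rfl⟩
      have hApos : 0 < sSup A := by
        have h1 : ⟪μ, μ⟫ / n1 μ ≤ sSup A := le_csSup hbdd hAmem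
        have h2 : 0 < ⟪μ, μ⟫ / n1 μ := by
          have hp : 0 < ⟪μ, μ⟫ :=
            lt_of_le_of_ne real_inner_self_nonneg
              (fun h => hμ0 (real_inner_self_nonpos.mp (le_of_eq h.symm)))
          exact div_pos hp (hn1 μ hμ0)
        linarith
      have hBle : sSup B ≤ C₀ * sSup A := by
        apply Real.sSup_le
        · rintro r ⟨z, hz0, rfl⟩
          by_cases hpos : 0 < ⟪μ, z⟫
          · set w : H := (Sh.orthogonalProjection z : H) with hw
            have hiw : ⟪μ, z⟫ = ⟪μ, w⟫ := hproj z
            have hw0 : w ≠ 0 := by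
              intro h
              rw [hiw, h, inner_zero_right] at hpos
              exact lt_irrefl 0 hpos
            have hwmem : ⟪μ, w⟫ / n1 w ∈ A :=
              ⟨w, (Sh.orthogonalProjection z).2, hw0, rfl⟩
            have hle : ⟪μ, w⟫ / n1 w ≤ sSup A := le_csSup hbdd hwmem
            have hn1w : 0 < n1 w := hn1 w hw0
            have hn1z : 0 < n1 z := hn1 z hz0
            have hstabz : n1 w ≤ C₀ * n1 z := hstab z
            rw [hiw]
            have key : ⟪μ, w⟫ / n1 z ≤ C₀ * (⟪μ, w⟫ / n1 w) := by
              rw [hiw] at hpos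
              have hq : 0 ≤ ⟪μ, w⟫ / n1 w := le_of_lt (div_pos hpos hn1w)
              have h1 : ⟪μ, w⟫ / n1 w * n1 w = ⟪μ, w⟫ :=
                div_mul_cancel₀ _ (ne_of_gt hn1w)
              rw [div_le_iff₀ hn1z]
              nlinarith [mul_le_mul_of_nonneg_left hstabz hq]
            calc ⟪μ, w⟫ / n1 z ≤ C₀ * (⟪μ, w⟫ / n1 w) := key
              _ ≤ C₀ * sSup A := by nlinarith
          · push_neg at hpos
            have : ⟪μ, z⟫ / n1 z ≤ 0 :=
              div_nonpos_of_nonpos_of_nonneg hpos (le_of_lt (hn1 z hz0))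
            nlinarith
        · positivity
      rw [ge_iff_le, one_div, inv_mul_le_iff₀ hC₀]
      linarith [hBle]
    · have hBunbdd : ¬ BddAbove B := by
        intro ⟨b, hb⟩
        exact hbdd ⟨b, fun r ⟨z, _, hz0, hr⟩ => hb ⟨z, hz0, hr⟩⟩
      have hAge : (0:ℝ) ≤ sSup A := le_of_eq (Real.sSup_of_not_bddAbove hbdd).symm
      rw [Real.sSup_of_not_bddAbove hBunbdd]
      simpa using hAge
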